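/- Let β > 0, L > 0, and let (A(t))_{t∈ℕ} be a sequence of n×n row-stochastic matrices each of which is β-rooted; let q_t, t ∈ ℕ, be stochastic vectors such that A(t)A(t−1)⋯A(s) → 𝟏 q_sᵀ entrywise as t → ∞ for each s. Let (α_t)_{t∈ℕ} be a nonnegative sequence with ∑_{t=1}^∞ α_t² < ∞, and let (d(t))_{t∈ℕ} be vectors in ℝⁿ with ‖d(t)‖ ≤ L for all t. Define x(t+1) = A(t)x(t) − α_t d(t) for t ∈ ℕ, from an arbitrary x(0) ∈ ℝⁿ, and set y(t) = q_tᵀ x(t). Then ∑_{t=1}^∞ α_t ‖x(t) − 𝟏 y(t)‖ < ∞. -/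

import Mathlib

open Filter

/-- A matrix is row-stochastic if it has nonnegative entries and each row sums to 1. -/
def RowStochastic {n : ℕ} (A : Matrix (Fin n) (Fin n) ℝ) : Prop :=
  (∀ i j, 0 ≤ A i j) ∧ ∀ i, ∑ j, A i j = 1

/-- A vector is stochastic if its entries are nonnegative and sum to 1. -/
def StochasticVec {n : ℕ} (q : Fin n → ℝ) : Prop :=
  (∀ i, 0 ≤ q i) ∧ ∑ i, q i = 1

/-- A directed graph is rooted if some vertex has a directed path to every other vertex. -/
def Rooted {V : Type*} (E : V → V → Prop) : Prop :=
  ∃ r : V, ∀ v : V, Relation.ReflTransGen E r v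

/-- A row-stochastic matrix `A` is `β`-rooted if its diagonal entries are at least `β`
and the directed graph with an edge from `j` to `i` whenever `i ≠ j` and `A i j ≥ β`
is rooted. -/
def BetaRooted {n : ℕ} (β : ℝ) (A : Matrix (Fin n) (Fin n) ℝ) : Prop :=
  (∀ i, β ≤ A i i) ∧ Rooted (fun j i : Fin n => i ≠ j ∧ β ≤ A i j)

/-- The backward product `Φ(t,s) = A(t) A(t-1) ⋯ A(s)` (for `t ≥ s`). -/
def backProd {n : ℕ} (A : ℕ → Matrix (Fin n) (Fin n) ℝ) (s t : ℕ) :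
    Matrix (Fin n) (Fin n) ℝ :=
  (((List.range' s (t + 1 - s)).reverse).map A).prod

/-- The Euclidean norm of a vector in `ℝⁿ`. -/
noncomputable def euclNorm {n : ℕ} (v : Fin n → ℝ) : ℝ :=
  Real.sqrt (∑ i, (v i) ^ 2)

namespace Stmt5Aux
variable {n : ℕ}

/-- forward-built product `Q A s k = A (s+k-1) * ⋯ * A s`. -/
def Q (A : ℕ → Matrix (Fin n) (Fin n) ℝ) (s : ℕ) : ℕ → Matrix (Fin n) (Fin n) ℝ
  | 0 => 1
  | k+1 => A (s+k) * Q A s k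

lemma Q_nonneg (A : ℕ → Matrix (Fin n) (Fin n) ℝ) (hA : ∀ t, RowStochastic (A t))
    (s : ℕ) : ∀ k i j, 0 ≤ Q A s k i j := by
  intro k
  induction k with
  | zero =>
    intro i j
    by_cases h : i = j <;> simp [Q, Matrix.one_apply, h]
  | succ k ih =>
    intro i j
    rw [Q, Matrix.mul_apply]
    exact Finset.sum_nonneg fun l _ => mul_nonneg ((hA (s+k)).1 i l) (ih l j)

lemma Q_rowsum (A : ℕ → Matrix (Fin n) (Fin n) ℝ) (hA : ∀ t, RowStochastic (A t))
    (s : ℕ) : ∀ k i, ∑ j, Q A s k i j = 1 := by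
  intro k
  induction k with
  | zero => intro i; simp [Q, Matrix.one_apply]
  | succ k ih =>
    intro i
    simp only [Q, Matrix.mul_apply]
    rw [Finset.sum_comm]
    calc ∑ l, ∑ j, A (s+k) i l * Q A s k l j
        = ∑ l, A (s+k) i l * ∑ j, Q A s k l j := by
          simp [Finset.mul_sum]
      _ = 1 := by simp only [ih, mul_one]; exact (hA (s+k)).2 i

lemma Q_entry_le_one (A : ℕ → Matrix (Fin n) (Fin n) ℝ) (hA : ∀ t, RowStochastic (A t))
    (s k : ℕ) (i j : Fin n) : Q A s k i j ≤ 1 := by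
  have h1 := Q_rowsum A hA s k i
  have : Q A s k i j ≤ ∑ j', Q A s k i j' :=
    Finset.single_le_sum (fun l _ => Q_nonneg A hA s k i l) (Finset.mem_univ j)
  linarith

lemma Q_diag {β : ℝ} (A : ℕ → Matrix (Fin n) (Fin n) ℝ) (hA : ∀ t, RowStochastic (A t))
    (hdiag : ∀ t i, β ≤ A t i i) (hβ : 0 ≤ β) (s : ℕ) :
    ∀ k i, β ^ k ≤ Q A s k i i := by
  intro k
  induction k with
  | zero => intro i; simp [Q, Matrix.one_apply]
  | succ k ih =>
    intro i
    rw [Q, Matrix.mul_apply]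
    calc β ^ (k+1) = β * β ^ k := by ring
      _ ≤ A (s+k) i i * Q A s k i i :=
          mul_le_mul (hdiag (s+k) i) (ih i) (by positivity) ((hA (s+k)).1 i i)
      _ ≤ ∑ l, A (s+k) i l * Q A s k l i :=
          Finset.single_le_sum
            (fun l _ => mul_nonneg ((hA (s+k)).1 i l) (Q_nonneg A hA s k l i))
            (Finset.mem_univ i)

lemma Q_mono {β : ℝ} (A : ℕ → Matrix (Fin n) (Fin n) ℝ) (hA : ∀ t, RowStochastic (A t))
    (hdiag : ∀ t i, β ≤ A t i i) (hβ : 0 ≤ β) (s k : ℕ) {i j : Fin n}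
    (h : β ^ k ≤ Q A s k i j) : β ^ (k+1) ≤ Q A s (k+1) i j := by
  rw [Q, Matrix.mul_apply]
  calc β ^ (k+1) = β * β ^ k := by ring
    _ ≤ A (s+k) i i * Q A s k i j :=
        mul_le_mul (hdiag (s+k) i) h (by positivity) ((hA (s+k)).1 i i)
    _ ≤ ∑ l, A (s+k) i l * Q A s k l j :=
        Finset.single_le_sum
          (fun l _ => mul_nonneg ((hA (s+k)).1 i l) (Q_nonneg A hA s k l j))
          (Finset.mem_univ i)

lemma Q_edge {β : ℝ} (A : ℕ → Matrix (Fin n) (Fin n) ℝ) (hA : ∀ t, RowStochastic (A t))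
    (hβ : 0 ≤ β) (s k : ℕ) {i l j : Fin n}
    (he : β ≤ A (s+k) i l) (h : β ^ k ≤ Q A s k l j) :
    β ^ (k+1) ≤ Q A s (k+1) i j := by
  rw [Q, Matrix.mul_apply]
  calc β ^ (k+1) = β * β ^ k := by ring
    _ ≤ A (s+k) i l * Q A s k l j :=
        mul_le_mul he h (by positivity) ((hA (s+k)).1 i l)
    _ ≤ ∑ l', A (s+k) i l' * Q A s k l' j :=
        Finset.single_le_sum
          (fun l' _ => mul_nonneg ((hA (s+k)).1 i l') (Q_nonneg A hA s k l' j))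
          (Finset.mem_univ l)


-- NEW PART BELOW

/-- the set of "β^k-reached" columns in row i of the k-fold product -/
noncomputable def Sset (β : ℝ) (A : ℕ → Matrix (Fin n) (Fin n) ℝ) (s k : ℕ) (i : Fin n) : Finset (Fin n) :=
  Finset.univ.filter (fun j => β ^ k ≤ Q A s k i j)

lemma Sset_subset_succ {β : ℝ} (A : ℕ → Matrix (Fin n) (Fin n) ℝ)
    (hA : ∀ t, RowStochastic (A t)) (hdiag : ∀ t i, β ≤ A t i i) (hβ : 0 ≤ β)
    (s k : ℕ) (i : Fin n) : Sset β A s k i ⊆ Sset β A s (k+1) i := by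
  intro j hj
  simp only [Sset, Finset.mem_filter, Finset.mem_univ, true_and] at hj ⊢
  exact Q_mono A hA hdiag hβ s k hj

lemma self_mem_Sset {β : ℝ} (A : ℕ → Matrix (Fin n) (Fin n) ℝ)
    (hA : ∀ t, RowStochastic (A t)) (hdiag : ∀ t i, β ≤ A t i i) (hβ : 0 ≤ β)
    (s k : ℕ) (i : Fin n) : i ∈ Sset β A s k i := by
  simp only [Sset, Finset.mem_filter, Finset.mem_univ, true_and]
  exact Q_diag A hA hdiag hβ s k i

/-- main combinatorial dichotomy -/
lemma dichotomy {β : ℝ} (A : ℕ → Matrix (Fin n) (Fin n) ℝ)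
    (hA : ∀ t, RowStochastic (A t)) (hroot : ∀ t, BetaRooted β (A t)) (hβ : 0 ≤ β)
    (s : ℕ) : ∀ k, (∃ j, ∀ i, j ∈ Sset β A s k i) ∨
      (n + k ≤ ∑ i, (Sset β A s k i).card) := by
  have hdiag : ∀ t i, β ≤ A t i i := fun t => (hroot t).1
  intro k
  induction k with
  | zero =>
    right
    simp only [Nat.add_zero]
    calc n = ∑ _i : Fin n, 1 := by simp
      _ ≤ ∑ i, (Sset β A s 0 i).card :=
        Finset.sum_le_sum fun i _ => Finset.card_pos.mpr
          ⟨i, self_mem_Sset A hA hdiag hβ s 0 i⟩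
  | succ k ih =>
    rcases ih with ⟨j, hj⟩ | hcard
    · left
      exact ⟨j, fun i => Sset_subset_succ A hA hdiag hβ s k i (hj i)⟩
    · by_cases hgrow : ∃ i, Sset β A s k i ≠ Sset β A s (k+1) i
      · right
        rcases hgrow with ⟨i₀, hi₀⟩
        have hstrict : Sset β A s k i₀ ⊂ Sset β A s (k+1) i₀ :=
          (Finset.ssubset_iff_subset_ne).mpr ⟨Sset_subset_succ A hA hdiag hβ s k i₀, hi₀⟩
        have : ∑ i, (Sset β A s k i).card < ∑ i, (Sset β A s (k+1) i).card := by
          apply Finset.sum_lt_sum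
          · exact fun i _ => Finset.card_le_card (Sset_subset_succ A hA hdiag hβ s k i)
          · exact ⟨i₀, Finset.mem_univ i₀, Finset.card_lt_card hstrict⟩
        omega
      · left
        push_neg at hgrow
        -- no growth: use rootedness of A (s+k)
        obtain ⟨r, hr⟩ := (hroot (s+k)).2
        refine ⟨r, fun i => ?_⟩
        -- show S k r ⊆ S k i along paths, then r ∈ S (k+1) i
        have key : ∀ i, Relation.ReflTransGen
            (fun j i : Fin n => i ≠ j ∧ β ≤ A (s+k) i j) r i →
            Sset β A s k r ⊆ Sset β A s k i := by
          intro i h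
          induction h with
          | refl => exact subset_rfl
          | tail hab e ih2 =>
            rename_i b c
            refine ih2.trans ?_
            rw [hgrow c]
            intro j hjb
            simp only [Sset, Finset.mem_filter, Finset.mem_univ, true_and] at hjb ⊢
            exact Q_edge A hA hβ s k e.2 hjb
        have hrSi : r ∈ Sset β A s k i := key i (hr i) (self_mem_Sset A hA hdiag hβ s k r)
        exact Sset_subset_succ A hA hdiag hβ s k i hrSi

/-- common positive column for the (n*n)-fold product -/
lemma common_column {β : ℝ} (A : ℕ → Matrix (Fin n) (Fin n) ℝ)
    (hA : ∀ t, RowStochastic (A t)) (hroot : ∀ t, BetaRooted β (A t)) (hβ : 0 ≤ β)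
    (hn : 1 ≤ n) (s : ℕ) :
    ∃ j, ∀ i, β ^ (n*n) ≤ Q A s (n*n) i j := by
  rcases dichotomy A hA hroot hβ s (n*n) with ⟨j, hj⟩ | hcard
  · exact ⟨j, fun i => by
      have := hj i
      simpa only [Sset, Finset.mem_filter, Finset.mem_univ, true_and] using this⟩
  · exfalso
    have hle : ∑ i, (Sset β A s (n*n) i).card ≤ n * n := by
      calc ∑ i, (Sset β A s (n*n) i).card ≤ ∑ _i : Fin n, n :=
            Finset.sum_le_sum fun i _ => by
              simpa using Finset.card_le_card (Finset.subset_univ (Sset β A s (n*n) i))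
        _ = n * n := by simp [Finset.sum_const, mul_comm]
    omega


section spsec
variable [Nonempty (Fin n)]

/-- the spread (max - min) of a vector -/
noncomputable def sp (v : Fin n → ℝ) : ℝ :=
  Finset.univ.sup' Finset.univ_nonempty v - Finset.univ.inf' Finset.univ_nonempty v

lemma le_sp_sup (v : Fin n → ℝ) (i : Fin n) :
    v i ≤ Finset.univ.sup' Finset.univ_nonempty v :=
  Finset.le_sup' v (Finset.mem_univ i)

lemma sp_inf_le (v : Fin n → ℝ) (i : Fin n) :
    Finset.univ.inf' Finset.univ_nonempty v ≤ v i :=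
  Finset.inf'_le v (Finset.mem_univ i)

lemma sp_nonneg (v : Fin n → ℝ) : 0 ≤ sp v := by
  obtain ⟨i⟩ := ‹Nonempty (Fin n)›
  have h1 := le_sp_sup v i
  have h2 := sp_inf_le v i
  unfold sp; linarith

lemma abs_sub_le_sp (v : Fin n → ℝ) {a b : ℝ}
    (ha1 : Finset.univ.inf' Finset.univ_nonempty v ≤ a)
    (ha2 : a ≤ Finset.univ.sup' Finset.univ_nonempty v)
    (hb1 : Finset.univ.inf' Finset.univ_nonempty v ≤ b)
    (hb2 : b ≤ Finset.univ.sup' Finset.univ_nonempty v) : |a - b| ≤ sp v := by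
  rw [abs_sub_le_iff]; unfold sp; constructor <;> linarith

/-- convex combination bounds -/
lemma dot_le_sup (w v : Fin n → ℝ) (hw0 : ∀ j, 0 ≤ w j) (hw1 : ∑ j, w j = 1) :
    ∑ j, w j * v j ≤ Finset.univ.sup' Finset.univ_nonempty v := by
  calc ∑ j, w j * v j ≤ ∑ j, w j * Finset.univ.sup' Finset.univ_nonempty v :=
        Finset.sum_le_sum fun j _ => mul_le_mul_of_nonneg_left (le_sp_sup v j) (hw0 j)
    _ = Finset.univ.sup' Finset.univ_nonempty v := by
        rw [← Finset.sum_mul, hw1, one_mul]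

lemma inf_le_dot (w v : Fin n → ℝ) (hw0 : ∀ j, 0 ≤ w j) (hw1 : ∑ j, w j = 1) :
    Finset.univ.inf' Finset.univ_nonempty v ≤ ∑ j, w j * v j := by
  calc Finset.univ.inf' Finset.univ_nonempty v
      = ∑ j, w j * Finset.univ.inf' Finset.univ_nonempty v := by
        rw [← Finset.sum_mul, hw1, one_mul]
    _ ≤ ∑ j, w j * v j :=
        Finset.sum_le_sum fun j _ => mul_le_mul_of_nonneg_left (sp_inf_le v j) (hw0 j)

/-- Dobrushin-type contraction when a common column is uniformly positive -/
lemma dobrushin {δ : ℝ} (P : Matrix (Fin n) (Fin n) ℝ)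
    (hP0 : ∀ i j, 0 ≤ P i j) (hP1 : ∀ i, ∑ j, P i j = 1)
    {j₀ : Fin n} (hcol : ∀ i, δ ≤ P i j₀) (hδ : 0 ≤ δ) (v : Fin n → ℝ) :
    sp (P.mulVec v) ≤ (1 - δ) * sp v := by
  set M := Finset.univ.sup' Finset.univ_nonempty v with hM
  set m := Finset.univ.inf' Finset.univ_nonempty v with hm
  have key : ∀ i, P.mulVec v i ≤ δ * v j₀ + (1 - δ) * M ∧
      δ * v j₀ + (1 - δ) * m ≤ P.mulVec v i := by
    intro i
    set c : Fin n → ℝ := fun j => P i j - δ * (if j = j₀ then 1 else 0) with hc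
    have hc0 : ∀ j, 0 ≤ c j := by
      intro j
      by_cases h : j = j₀ <;> simp only [hc, h, if_pos, if_neg, mul_one, mul_zero]
      · subst h; linarith [hcol i]
      · simp [h]; exact hP0 i j
    have hcsum : ∑ j, c j = 1 - δ := by
      simp only [hc]
      rw [Finset.sum_sub_distrib, hP1 i]
      simp
    have hsplit : P.mulVec v i = δ * v j₀ + ∑ j, c j * v j := by
      simp only [Matrix.mulVec, dotProduct, hc]
      rw [Finset.sum_congr rfl (fun j _ => by by_cases h : j = j₀ <;> simp [h] <;> ring :
        ∀ j ∈ Finset.univ, (P i j - δ * (if j = j₀ then 1 else 0)) * v j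
          = P i j * v j - (if j = j₀ then δ * v j else 0))]
      rw [Finset.sum_sub_distrib, Finset.sum_ite_eq' Finset.univ j₀ (fun j => δ * v j)]
      simp
    constructor
    · rw [hsplit]
      have : ∑ j, c j * v j ≤ (1 - δ) * M := by
        calc ∑ j, c j * v j ≤ ∑ j, c j * M :=
              Finset.sum_le_sum fun j _ => mul_le_mul_of_nonneg_left (le_sp_sup v j) (hc0 j)
          _ = (1 - δ) * M := by rw [← Finset.sum_mul, hcsum]
      linarith
    · rw [hsplit]
      have : (1 - δ) * m ≤ ∑ j, c j * v j := by
        calc (1 - δ) * m = ∑ j, c j * m := by rw [← Finset.sum_mul, hcsum]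
          _ ≤ ∑ j, c j * v j :=
              Finset.sum_le_sum fun j _ => mul_le_mul_of_nonneg_left (sp_inf_le v j) (hc0 j)
      linarith
  have hsup : Finset.univ.sup' Finset.univ_nonempty (P.mulVec v) ≤ δ * v j₀ + (1 - δ) * M :=
    Finset.sup'_le _ _ fun i _ => (key i).1
  have hinf : δ * v j₀ + (1 - δ) * m ≤ Finset.univ.inf' Finset.univ_nonempty (P.mulVec v) :=
    Finset.le_inf' _ _ fun i _ => (key i).2
  unfold sp
  rw [← hM, ← hm]
  have : sp v = M - m := rfl
  -- goal: sup'(Pv) - inf'(Pv) ≤ (1-δ)*(M - m)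
  calc Finset.univ.sup' Finset.univ_nonempty (P.mulVec v)
        - Finset.univ.inf' Finset.univ_nonempty (P.mulVec v)
      ≤ (δ * v j₀ + (1 - δ) * M) - (δ * v j₀ + (1 - δ) * m) := by linarith
    _ = (1 - δ) * (M - m) := by ring
    _ = (1 - δ) * sp v := by rw [this]


-- NEW

lemma sp_perturb (u w : Fin n → ℝ) {E : ℝ} (h : ∀ i, |u i - w i| ≤ E) :
    sp u ≤ sp w + 2 * E := by
  have hsup : Finset.univ.sup' Finset.univ_nonempty u ≤
      Finset.univ.sup' Finset.univ_nonempty w + E := by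
    apply Finset.sup'_le
    intro i _
    have := abs_le.mp (h i)
    have := le_sp_sup w i
    linarith [this]
  have hinf : Finset.univ.inf' Finset.univ_nonempty w - E ≤
      Finset.univ.inf' Finset.univ_nonempty u := by
    apply Finset.le_inf'
    intro i _
    have h1 := abs_le.mp (h i)
    have h2 := sp_inf_le w i
    linarith [h1.1, h2]
  unfold sp
  linarith

section dynamics
variable {L : ℝ} (A : ℕ → Matrix (Fin n) (Fin n) ℝ) (hA : ∀ t, RowStochastic (A t))
  (α : ℕ → ℝ) (hα0 : ∀ t, 0 ≤ α t) (d : ℕ → Fin n → ℝ) (hdL : ∀ t i, |d t i| ≤ L)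
  (x : ℕ → Fin n → ℝ) (hdyn : ∀ t, x (t + 1) = (A t).mulVec (x t) - α t • d t)

include hA hα0 hdL hdyn

lemma deviation (t : ℕ) : ∀ k, ∀ i,
    |x (t + k) i - (Q A t k).mulVec (x t) i| ≤ L * ∑ j ∈ Finset.range k, α (t + j) := by
  intro k
  induction k with
  | zero =>
    intro i
    simp [Q, Matrix.one_mulVec]
  | succ k ih =>
    intro i
    have hx : x (t + (k+1)) = (A (t+k)).mulVec (x (t+k)) - α (t+k) • d (t+k) := by
      rw [← hdyn (t+k)]; ring_nf
    have hQ : (Q A t (k+1)).mulVec (x t) = (A (t+k)).mulVec ((Q A t k).mulVec (x t)) := by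
      rw [Q, ← Matrix.mulVec_mulVec]
    rw [hx, hQ]
    have expand : ((A (t+k)).mulVec (x (t+k)) - α (t+k) • d (t+k)) i
        - (A (t+k)).mulVec ((Q A t k).mulVec (x t)) i
        = (∑ l, A (t+k) i l * (x (t+k) l - (Q A t k).mulVec (x t) l))
          - α (t+k) * d (t+k) i := by
      simp only [Pi.sub_apply, Pi.smul_apply, smul_eq_mul, Matrix.mulVec, dotProduct]
      simp only [mul_sub, Finset.sum_sub_distrib]
      ring
    rw [expand]
    have h1 : |∑ l, A (t+k) i l * (x (t+k) l - (Q A t k).mulVec (x t) l)|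
        ≤ L * ∑ j ∈ Finset.range k, α (t + j) := by
      calc |∑ l, A (t+k) i l * (x (t+k) l - (Q A t k).mulVec (x t) l)|
          ≤ ∑ l, |A (t+k) i l * (x (t+k) l - (Q A t k).mulVec (x t) l)| :=
            Finset.abs_sum_le_sum_abs _ _
        _ ≤ ∑ l, A (t+k) i l * (L * ∑ j ∈ Finset.range k, α (t + j)) := by
            apply Finset.sum_le_sum
            intro l _
            rw [abs_mul, abs_of_nonneg ((hA (t+k)).1 i l)]
            exact mul_le_mul_of_nonneg_left (ih l) ((hA (t+k)).1 i l)
        _ = L * ∑ j ∈ Finset.range k, α (t + j) := by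
            rw [← Finset.sum_mul, (hA (t+k)).2 i, one_mul]
    have h2 : |α (t+k) * d (t+k) i| ≤ α (t+k) * L := by
      rw [abs_mul, abs_of_nonneg (hα0 (t+k))]
      exact mul_le_mul_of_nonneg_left (hdL (t+k) i) (hα0 (t+k))
    calc |(∑ l, A (t+k) i l * (x (t+k) l - (Q A t k).mulVec (x t) l))
          - α (t+k) * d (t+k) i|
        ≤ |∑ l, A (t+k) i l * (x (t+k) l - (Q A t k).mulVec (x t) l)|
          + |α (t+k) * d (t+k) i| := abs_sub _ _
      _ ≤ L * ∑ j ∈ Finset.range k, α (t + j) + α (t+k) * L := by linarith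
      _ = L * ∑ j ∈ Finset.range (k+1), α (t + j) := by
          rw [Finset.sum_range_succ]; ring

lemma sp_block {δ : ℝ} (hδ : 0 ≤ δ) (t k : ℕ) {j₀ : Fin n}
    (hcol : ∀ i, δ ≤ Q A t k i j₀) :
    sp (x (t + k)) ≤ (1 - δ) * sp (x t) + 2 * (L * ∑ j ∈ Finset.range k, α (t + j)) := by
  have h1 := sp_perturb (x (t+k)) ((Q A t k).mulVec (x t))
    (deviation A hA α hα0 d hdL x hdyn t k)
  have h2 := dobrushin (Q A t k) (Q_nonneg A hA t k) (Q_rowsum A hA t k) hcol hδ (x t)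
  linarith

lemma sp_steps (t k : ℕ) :
    sp (x (t + k)) ≤ sp (x t) + 2 * (L * ∑ j ∈ Finset.range k, α (t + j)) := by
  obtain ⟨j₀⟩ := ‹Nonempty (Fin n)›
  have := sp_block A hA α hα0 d hdL x hdyn (le_refl (0:ℝ)) t k
    (j₀ := j₀) (fun i => Q_nonneg A hA t k i j₀)
  simpa using this

end dynamics
end spsec

section series
variable {lam L Q2 : ℝ} {m : ℕ} (hm : 0 < m) (hlam0 : 0 ≤ lam) (hlam1 : lam < 1)
  (hL : 0 ≤ L)

include hlam0 hlam1 in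
lemma geom_bdd : ∀ T, ∑ k ∈ Finset.range T, lam ^ k ≤ (1 - lam)⁻¹ := by
  intro T
  have h1 : 0 < 1 - lam := by linarith
  have hgm := geom_sum_mul lam T
  have hpow : 0 ≤ lam ^ T := pow_nonneg hlam0 T
  rw [inv_eq_one_div, le_div_iff₀ h1]
  nlinarith [hgm, hpow]

include hm hlam0 hlam1 in
lemma geom_div_bdd : ∀ T, ∑ t ∈ Finset.range T, lam ^ (t / m) ≤ m * (1 - lam)⁻¹ := by
  have block : ∀ T, ∑ t ∈ Finset.range (m * T), lam ^ (t / m)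
      = ∑ k ∈ Finset.range T, (m : ℝ) * lam ^ k := by
    intro T
    induction T with
    | zero => simp
    | succ T ih =>
      have hico : ∑ t ∈ Finset.Ico (m*T) (m*T+m), lam ^ (t / m) = (m:ℝ) * lam ^ T := by
        rw [Finset.sum_Ico_eq_sum_range]
        rw [show m * T + m - m * T = m by omega]
        have hc : ∀ j ∈ Finset.range m, lam ^ ((m * T + j) / m) = lam ^ T := by
          intro j hj
          rw [Nat.mul_add_div hm, Nat.div_eq_of_lt (Finset.mem_range.mp hj), Nat.add_zero]
        rw [Finset.sum_congr rfl hc, Finset.sum_const, Finset.card_range, nsmul_eq_mul]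
      calc ∑ t ∈ Finset.range (m * (T+1)), lam ^ (t / m)
          = ∑ t ∈ Finset.Ico 0 (m*T+m), lam ^ (t / m) := by
            rw [← Finset.range_eq_Ico, show m * (T+1) = m*T+m by ring]
        _ = ∑ t ∈ Finset.Ico 0 (m*T), lam ^ (t / m)
            + ∑ t ∈ Finset.Ico (m*T) (m*T+m), lam ^ (t / m) :=
            (Finset.sum_Ico_consecutive _ (Nat.zero_le _) (Nat.le_add_right _ _)).symm
        _ = ∑ k ∈ Finset.range T, (m:ℝ) * lam ^ k + (m:ℝ) * lam ^ T := by
            rw [← Finset.range_eq_Ico, ih, hico]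
        _ = ∑ k ∈ Finset.range (T+1), (m:ℝ) * lam ^ k := (Finset.sum_range_succ _ T).symm
  intro T
  calc ∑ t ∈ Finset.range T, lam ^ (t / m)
      ≤ ∑ t ∈ Finset.range (m * T), lam ^ (t / m) := by
        apply Finset.sum_le_sum_of_subset_of_nonneg
        · exact Finset.range_subset_range.mpr (Nat.le_mul_of_pos_left T hm)
        · intro t _ _; positivity
    _ = ∑ k ∈ Finset.range T, (m:ℝ) * lam ^ k := block T
    _ = (m:ℝ) * ∑ k ∈ Finset.range T, lam ^ k := by rw [Finset.mul_sum]
    _ ≤ (m:ℝ) * (1 - lam)⁻¹ := by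
        apply mul_le_mul_of_nonneg_left (geom_bdd hlam0 hlam1 T)
        positivity

variable (S α : ℕ → ℝ) (hS0 : ∀ t, 0 ≤ S t) (hα0 : ∀ t, 0 ≤ α t)
  (h1 : ∀ t k, S (t + k) ≤ S t + 2 * (L * ∑ j ∈ Finset.range k, α (t + j)))
  (h2 : ∀ t, S (t + m) ≤ lam * S t + 2 * (L * ∑ j ∈ Finset.range m, α (t + j)))

include hm hlam0 hL hα0 h1 h2 in
lemma master : ∀ t, S t ≤ lam ^ (t / m) * S 0
    + 2 * L * ∑ s ∈ Finset.range t, lam ^ ((t - 1 - s) / m) * α s := by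
  intro t
  induction t using Nat.strong_induction_on with
  | _ t ih =>
    by_cases ht : t < m
    · have := h1 0 t
      simp only [Nat.zero_add] at this
      rw [Nat.div_eq_of_lt ht, pow_zero, one_mul]
      have hsum : ∑ s ∈ Finset.range t, lam ^ ((t - 1 - s) / m) * α s
          = ∑ s ∈ Finset.range t, α s := by
        refine Finset.sum_congr rfl fun s hs => ?_
        rw [Nat.div_eq_of_lt (by omega), pow_zero, one_mul]
      rw [hsum]
      linarith
    · push_neg at ht
      have hsub : t - m + m = t := by omega
      have hIH := ih (t - m) (by omega)
      have hstep := h2 (t - m)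
      rw [hsub] at hstep
      set P : ℝ := ∑ s ∈ Finset.range (t - m), lam ^ ((t - m - 1 - s) / m) * α s with hPdef
      set R : ℝ := ∑ j ∈ Finset.range m, α (t - m + j) with hRdef
      have hmul : lam * S (t - m) ≤ lam * (lam ^ ((t - m) / m) * S 0 + 2 * L * P) :=
        mul_le_mul_of_nonneg_left hIH hlam0
      have hdiv : lam * lam ^ ((t - m) / m) = lam ^ (t / m) := by
        have hq : t / m = (t - m) / m + 1 := by
          conv_lhs => rw [← hsub]
          rw [Nat.add_div_right _ hm]
        rw [hq, pow_succ]; ring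
      have hdecomp : ∀ g : ℕ → ℝ, ∑ s ∈ Finset.range t, g s
          = ∑ s ∈ Finset.range (t - m), g s + ∑ j ∈ Finset.range m, g (t - m + j) := by
        intro g
        calc ∑ s ∈ Finset.range t, g s = ∑ s ∈ Finset.Ico 0 t, g s := by
              rw [Finset.range_eq_Ico]
          _ = ∑ s ∈ Finset.Ico 0 (t-m), g s + ∑ s ∈ Finset.Ico (t-m) t, g s :=
              (Finset.sum_Ico_consecutive _ (Nat.zero_le _) (by omega)).symm
          _ = ∑ s ∈ Finset.range (t-m), g s + ∑ j ∈ Finset.range (t - (t-m)), g (t-m+j) := by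
              rw [← Finset.range_eq_Ico, Finset.sum_Ico_eq_sum_range]
          _ = _ := by rw [show t - (t-m) = m by omega]
      have hsplit : ∑ s ∈ Finset.range t, lam ^ ((t - 1 - s) / m) * α s
          = lam * P + R := by
        rw [hdecomp (fun s => lam ^ ((t - 1 - s) / m) * α s)]
        congr 1
        · rw [hPdef, Finset.mul_sum]
          refine Finset.sum_congr rfl fun s hs => ?_
          have hs' := Finset.mem_range.mp hs
          rw [show t - 1 - s = (t - m - 1 - s) + m by omega, Nat.add_div_right _ hm, pow_succ]
          ring
        · rw [hRdef]
          refine Finset.sum_congr rfl fun j hj => ?_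
          have hj' := Finset.mem_range.mp hj
          rw [Nat.div_eq_of_lt (by omega), pow_zero, one_mul]
      have hc : lam * (lam ^ ((t-m)/m) * S 0 + 2*L*P) = lam ^ (t/m) * S 0 + 2*L*(lam*P) := by
        rw [← hdiv]; ring
      rw [hsplit]
      calc S t ≤ lam * S (t - m) + 2 * (L * R) := hstep
        _ ≤ lam ^ (t/m) * S 0 + 2*L*(lam*P) + 2 * (L * R) := by linarith
        _ = lam ^ (t/m) * S 0 + 2*L*(lam*P + R) := by ring

end series

section series2
variable {lam L Q2 : ℝ} {m : ℕ} (hm : 0 < m) (hlam0 : 0 ≤ lam) (hlam1 : lam < 1)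
  (hL : 0 ≤ L)
variable (S α : ℕ → ℝ) (hS0 : ∀ t, 0 ≤ S t) (hα0 : ∀ t, 0 ≤ α t)
  (hQ2 : ∀ T, ∑ t ∈ Finset.range T, (α t) ^ 2 ≤ Q2)
  (hmas : ∀ t, S t ≤ lam ^ (t / m) * S 0
    + 2 * L * ∑ s ∈ Finset.range t, lam ^ ((t - 1 - s) / m) * α s)

include hm hlam0 hlam1 hL hS0 hα0 hQ2 hmas in
lemma partial_bound : ∀ T, ∑ t ∈ Finset.range T, α t * S t
    ≤ S 0 * ((Q2 + m * (1 - lam)⁻¹)/2) + 2 * L * ((m * (1 - lam)⁻¹) * Q2) := by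
  set M : ℝ := m * (1 - lam)⁻¹ with hMdef
  have h1m : 0 < 1 - lam := by linarith
  have hM0 : 0 ≤ M := by positivity
  have hQ20 : 0 ≤ Q2 := le_trans (by simp) (hQ2 0)
  have hrow : ∀ t, ∑ s ∈ Finset.range t, lam ^ ((t - 1 - s) / m) ≤ M := by
    intro t
    have := Finset.sum_range_reflect (fun u => lam ^ (u / m)) t
    calc ∑ s ∈ Finset.range t, lam ^ ((t - 1 - s) / m)
        = ∑ u ∈ Finset.range t, lam ^ (u / m) := this
      _ ≤ M := geom_div_bdd hm hlam0 hlam1 t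
  intro T
  have step1 : ∑ t ∈ Finset.range T, α t * S t
      ≤ ∑ t ∈ Finset.range T, (α t * lam ^ (t / m) * S 0
          + 2 * L * ∑ s ∈ Finset.range t, lam ^ ((t - 1 - s) / m) * (α t * α s)) := by
    apply Finset.sum_le_sum
    intro t _
    have := mul_le_mul_of_nonneg_left (hmas t) (hα0 t)
    calc α t * S t ≤ α t * (lam ^ (t / m) * S 0
        + 2 * L * ∑ s ∈ Finset.range t, lam ^ ((t - 1 - s) / m) * α s) := this
      _ = α t * lam ^ (t / m) * S 0
          + 2 * L * ∑ s ∈ Finset.range t, lam ^ ((t - 1 - s) / m) * (α t * α s) := by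
        rw [mul_add]
        congr 1
        · ring
        · rw [Finset.mul_sum, Finset.mul_sum, Finset.mul_sum]
          refine Finset.sum_congr rfl fun s _ => ?_
          ring
  rw [Finset.sum_add_distrib] at step1
  -- term 1
  have T1 : ∑ t ∈ Finset.range T, α t * lam ^ (t / m) * S 0 ≤ S 0 * ((Q2 + M)/2) := by
    have h : ∑ t ∈ Finset.range T, α t * lam ^ (t / m) ≤ (Q2 + M)/2 := by
      have hterm : ∀ t ∈ Finset.range T, α t * lam ^ (t / m)
          ≤ ((α t)^2 + lam ^ (t / m)) / 2 := by
        intro t _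
        have hp0 : 0 ≤ lam ^ (t / m) := pow_nonneg hlam0 _
        have hp1 : lam ^ (t / m) ≤ 1 := pow_le_one₀ hlam0 (le_of_lt hlam1)
        nlinarith [sq_nonneg (α t - lam ^ (t / m))]
      calc ∑ t ∈ Finset.range T, α t * lam ^ (t / m)
          ≤ ∑ t ∈ Finset.range T, ((α t)^2 + lam ^ (t / m)) / 2 :=
            Finset.sum_le_sum hterm
        _ = (∑ t ∈ Finset.range T, (α t)^2 + ∑ t ∈ Finset.range T, lam ^ (t / m)) / 2 := by
            rw [← Finset.sum_add_distrib, Finset.sum_div]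
        _ ≤ (Q2 + M) / 2 := by
            have := hQ2 T
            have := geom_div_bdd hm hlam0 hlam1 T
            linarith
    calc ∑ t ∈ Finset.range T, α t * lam ^ (t / m) * S 0
        = (∑ t ∈ Finset.range T, α t * lam ^ (t / m)) * S 0 := by
          rw [Finset.sum_mul]
      _ ≤ (Q2 + M)/2 * S 0 := mul_le_mul_of_nonneg_right h (hS0 0)
      _ = S 0 * ((Q2 + M)/2) := by ring
  -- term 2
  have T2 : ∑ t ∈ Finset.range T, ∑ s ∈ Finset.range t, lam ^ ((t - 1 - s) / m) * (α t * α s)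
      ≤ M * Q2 := by
    have hAM : ∀ t ∈ Finset.range T, ∀ s ∈ Finset.range t,
        lam ^ ((t - 1 - s) / m) * (α t * α s)
        ≤ lam ^ ((t - 1 - s) / m) * ((α t)^2/2 + (α s)^2/2) := by
      intro t _ s _
      apply mul_le_mul_of_nonneg_left _ (pow_nonneg hlam0 _)
      nlinarith [sq_nonneg (α t - α s)]
    have hA : ∑ t ∈ Finset.range T, ∑ s ∈ Finset.range t,
        lam ^ ((t - 1 - s) / m) * ((α t)^2/2) ≤ M * Q2 / 2 := by
      calc ∑ t ∈ Finset.range T, ∑ s ∈ Finset.range t,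
            lam ^ ((t - 1 - s) / m) * ((α t)^2/2)
          = ∑ t ∈ Finset.range T,
              (∑ s ∈ Finset.range t, lam ^ ((t - 1 - s) / m)) * ((α t)^2/2) := by
            refine Finset.sum_congr rfl fun t _ => ?_
            rw [Finset.sum_mul]
        _ ≤ ∑ t ∈ Finset.range T, M * ((α t)^2/2) := by
            apply Finset.sum_le_sum
            intro t _
            apply mul_le_mul_of_nonneg_right (hrow t)
            positivity
        _ = M / 2 * ∑ t ∈ Finset.range T, (α t)^2 := by
            rw [Finset.mul_sum]
            refine Finset.sum_congr rfl fun t _ => by ring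
        _ ≤ M / 2 * Q2 := by
            apply mul_le_mul_of_nonneg_left (hQ2 T)
            positivity
        _ = M * Q2 / 2 := by ring
    have hB : ∑ t ∈ Finset.range T, ∑ s ∈ Finset.range t,
        lam ^ ((t - 1 - s) / m) * ((α s)^2/2) ≤ M * Q2 / 2 := by
      have hswap : ∑ t ∈ Finset.range T, ∑ s ∈ Finset.range t,
          lam ^ ((t - 1 - s) / m) * ((α s)^2/2)
          = ∑ s ∈ Finset.range T, ∑ t ∈ Finset.Ico (s+1) T,
              lam ^ ((t - 1 - s) / m) * ((α s)^2/2) := by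
        have := Finset.sum_Ico_Ico_comm' 0 T
          (fun s t => lam ^ ((t - 1 - s) / m) * ((α s)^2/2))
        rw [Finset.range_eq_Ico]
        rw [this]; simp only [Finset.range_eq_Ico]
      rw [hswap]
      have hinner : ∀ s ∈ Finset.range T, ∑ t ∈ Finset.Ico (s+1) T,
          lam ^ ((t-1-s)/m) * ((α s)^2/2) ≤ M * ((α s)^2/2) := by
        intro s _
        rw [Finset.sum_Ico_eq_sum_range]
        have hc : ∀ j ∈ Finset.range (T - (s+1)),
            lam ^ ((s+1+j-1-s)/m) * ((α s)^2/2) = lam ^ (j/m) * ((α s)^2/2) := by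
          intro j _
          rw [show s+1+j-1-s = j by omega]
        rw [Finset.sum_congr rfl hc, ← Finset.sum_mul]
        exact mul_le_mul_of_nonneg_right (geom_div_bdd hm hlam0 hlam1 _) (by positivity)
      calc ∑ s ∈ Finset.range T, ∑ t ∈ Finset.Ico (s+1) T,
            lam ^ ((t - 1 - s) / m) * ((α s)^2/2)
          ≤ ∑ s ∈ Finset.range T, M * ((α s)^2/2) := Finset.sum_le_sum hinner
        _ = M / 2 * ∑ s ∈ Finset.range T, (α s)^2 := by
            rw [Finset.mul_sum]
            exact Finset.sum_congr rfl fun s _ => by ring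
        _ ≤ M / 2 * Q2 := mul_le_mul_of_nonneg_left (hQ2 T) (by positivity)
        _ = M * Q2 / 2 := by ring
    calc ∑ t ∈ Finset.range T, ∑ s ∈ Finset.range t,
          lam ^ ((t - 1 - s) / m) * (α t * α s)
        ≤ ∑ t ∈ Finset.range T, ∑ s ∈ Finset.range t,
          (lam ^ ((t - 1 - s) / m) * ((α t)^2/2)
            + lam ^ ((t - 1 - s) / m) * ((α s)^2/2)) := by
          apply Finset.sum_le_sum
          intro t ht
          apply Finset.sum_le_sum
          intro s hs
          have := hAM t ht s hs
          calc lam ^ ((t - 1 - s) / m) * (α t * α s)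
              ≤ lam ^ ((t - 1 - s) / m) * ((α t)^2/2 + (α s)^2/2) := this
            _ = lam ^ ((t - 1 - s) / m) * ((α t)^2/2)
                + lam ^ ((t - 1 - s) / m) * ((α s)^2/2) := by ring
      _ = ∑ t ∈ Finset.range T, ∑ s ∈ Finset.range t,
            lam ^ ((t - 1 - s) / m) * ((α t)^2/2)
          + ∑ t ∈ Finset.range T, ∑ s ∈ Finset.range t,
            lam ^ ((t - 1 - s) / m) * ((α s)^2/2) := by
          rw [← Finset.sum_add_distrib]
          refine Finset.sum_congr rfl fun t _ => Finset.sum_add_distrib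
      _ ≤ M * Q2 / 2 + M * Q2 / 2 := add_le_add hA hB
      _ = M * Q2 := by ring
  calc ∑ t ∈ Finset.range T, α t * S t
      ≤ ∑ t ∈ Finset.range T, α t * lam ^ (t / m) * S 0
        + ∑ t ∈ Finset.range T, 2 * L
            * ∑ s ∈ Finset.range t, lam ^ ((t - 1 - s) / m) * (α t * α s) := step1
    _ ≤ S 0 * ((Q2 + M)/2) + 2 * L * (M * Q2) := by
        have h2 : ∑ t ∈ Finset.range T, 2 * L
            * ∑ s ∈ Finset.range t, lam ^ ((t - 1 - s) / m) * (α t * α s)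
            = 2 * L * ∑ t ∈ Finset.range T,
                ∑ s ∈ Finset.range t, lam ^ ((t - 1 - s) / m) * (α t * α s) := by
          rw [Finset.mul_sum]
        rw [h2]
        have hmul := mul_le_mul_of_nonneg_left T2 (by positivity : (0:ℝ) ≤ 2 * L)
        linarith [T1]
end series2

end Stmt5Aux

open Stmt5Aux in
/-- If the matrices are `β`-rooted and row-stochastic, the gradient perturbations are
bounded by `L`, and the step-sizes are square-summable, then `∑ₜ αₜ ‖x(t) − 𝟏 y(t)‖ < ∞`, where
`y(t) = qₜᵀ x(t)`. -/
theorem stmt5 {n : ℕ} (β L : ℝ) (hβ : 0 < β) (hL : 0 < L)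
    (A : ℕ → Matrix (Fin n) (Fin n) ℝ)
    (hstoch : ∀ t, RowStochastic (A t)) (hrooted : ∀ t, BetaRooted β (A t))
    (q : ℕ → Fin n → ℝ) (hq : ∀ s, StochasticVec (q s))
    (hconv : ∀ s i j, Tendsto (fun t => backProd A s t i j) atTop (nhds (q s j)))
    (α : ℕ → ℝ) (hα0 : ∀ t, 0 ≤ α t) (hα2 : Summable (fun t => (α t) ^ 2))
    (d : ℕ → Fin n → ℝ) (hd : ∀ t, euclNorm (d t) ≤ L)
    (x : ℕ → Fin n → ℝ)
    (hdyn : ∀ t, x (t + 1) = (A t).mulVec (x t) - α t • d t) :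
    Summable (fun t => α t * euclNorm (fun i => x t i - ∑ j, q t j * x t j)) := by
  obtain hn0 | hn1 | hn2 : n = 0 ∨ n = 1 ∨ 2 ≤ n := by omega
  · subst hn0
    have hz : (fun t => α t * euclNorm (fun i => x t i - ∑ j, q t j * x t j))
        = fun _ => (0:ℝ) := by
      funext t
      simp [euclNorm]
    rw [hz]; exact summable_zero
  · subst hn1
    have hz : (fun t => α t * euclNorm (fun i => x t i - ∑ j, q t j * x t j))
        = fun _ => (0:ℝ) := by
      funext t
      have hq1 : q t 0 = 1 := by
        have := (hq t).2
        simpa using this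
      have hv : (fun i : Fin 1 => x t i - ∑ j, q t j * x t j) = fun _ => (0:ℝ) := by
        funext i
        have hi : i = 0 := Subsingleton.elim _ _
        subst hi
        simp [Fin.sum_univ_one, hq1]
      rw [hv]
      simp [euclNorm]
    rw [hz]; exact summable_zero
  · -- main case : n ≥ 2
    haveI : Nonempty (Fin n) := ⟨⟨0, by omega⟩⟩
    have hL0 : (0:ℝ) ≤ L := le_of_lt hL
    have hβ0 : (0:ℝ) ≤ β := le_of_lt hβ
    set m : ℕ := n * n with hmdef
    have hm : 0 < m := Nat.mul_pos (by omega) (by omega)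
    -- common positive column for every window
    have hcol : ∀ t, ∃ j, ∀ i, β ^ m ≤ Q A t m i j :=
      fun t => common_column A hstoch hrooted hβ0 (by omega) t
    set δ : ℝ := β ^ m with hδdef
    have hδ0 : 0 < δ := pow_pos hβ m
    have hδ1 : δ ≤ 1 := by
      obtain ⟨j, hj⟩ := hcol 0
      exact le_trans (hj j) (Q_entry_le_one A hstoch 0 m j j)
    have hlam0 : (0:ℝ) ≤ 1 - δ := by linarith
    have hlam1 : 1 - δ < 1 := by linarith
    -- entrywise bound on d
    have hdL : ∀ t i, |d t i| ≤ L := by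
      intro t i
      rw [← Real.sqrt_sq_eq_abs]
      refine le_trans (Real.sqrt_le_sqrt ?_) (hd t)
      exact Finset.single_le_sum (fun j _ => sq_nonneg (d t j)) (Finset.mem_univ i)
    set S : ℕ → ℝ := fun t => sp (x t) with hSdef
    have hS0 : ∀ t, 0 ≤ S t := fun t => sp_nonneg (x t)
    have h1 : ∀ t k, S (t + k) ≤ S t + 2 * (L * ∑ j ∈ Finset.range k, α (t + j)) :=
      fun t k => sp_steps A hstoch α hα0 d hdL x hdyn t k
    have h2 : ∀ t, S (t + m) ≤ (1 - δ) * S t + 2 * (L * ∑ j ∈ Finset.range m, α (t + j)) := by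
      intro t
      obtain ⟨j₀, hj⟩ := hcol t
      exact sp_block A hstoch α hα0 d hdL x hdyn (le_of_lt hδ0) t m hj
    have hmas := master hm hlam0 hL0 S α hα0 h1 h2
    set Q2 : ℝ := ∑' t, (α t) ^ 2 with hQ2def
    have hQ2 : ∀ T, ∑ t ∈ Finset.range T, (α t) ^ 2 ≤ Q2 :=
      fun T => Summable.sum_le_tsum _ (fun i _ => sq_nonneg (α i)) hα2
    have hpb := partial_bound hm hlam0 hlam1 hL0 S α hS0 hα0 hQ2 hmas
    have hsum1 : Summable (fun t => α t * S t) :=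
      summable_of_sum_range_le (fun t => mul_nonneg (hα0 t) (hS0 t)) hpb
    have hsum2 : Summable (fun t => Real.sqrt n * (α t * S t)) := hsum1.mul_left _
    refine Summable.of_nonneg_of_le
      (fun t => mul_nonneg (hα0 t) (Real.sqrt_nonneg _)) (fun t => ?_) hsum2
    -- pointwise comparison
    set y : ℝ := ∑ j, q t j * x t j with hydef
    have hy1 : Finset.univ.inf' Finset.univ_nonempty (x t) ≤ y :=
      inf_le_dot (q t) (x t) (hq t).1 (hq t).2
    have hy2 : y ≤ Finset.univ.sup' Finset.univ_nonempty (x t) :=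
      dot_le_sup (q t) (x t) (hq t).1 (hq t).2
    have hterm : ∀ i, (x t i - y) ^ 2 ≤ (S t) ^ 2 := by
      intro i
      have habs : |x t i - y| ≤ S t :=
        abs_sub_le_sp (x t) (sp_inf_le (x t) i) (le_sp_sup (x t) i) hy1 hy2
      calc (x t i - y) ^ 2 = |x t i - y| ^ 2 := (sq_abs _).symm
        _ ≤ (S t) ^ 2 := pow_le_pow_left₀ (abs_nonneg _) habs 2
    have heucl : euclNorm (fun i => x t i - y) ≤ Real.sqrt n * S t := by
      unfold euclNorm
      calc Real.sqrt (∑ i, (x t i - y) ^ 2)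
          ≤ Real.sqrt (∑ _i : Fin n, (S t) ^ 2) :=
            Real.sqrt_le_sqrt (Finset.sum_le_sum fun i _ => hterm i)
        _ = Real.sqrt ((n : ℝ) * (S t) ^ 2) := by
            rw [Finset.sum_const, Finset.card_univ, Fintype.card_fin, nsmul_eq_mul]
        _ = Real.sqrt n * S t := by
            rw [Real.sqrt_mul (Nat.cast_nonneg n), Real.sqrt_sq (hS0 t)]
    calc α t * euclNorm (fun i => x t i - ∑ j, q t j * x t j)
        = α t * euclNorm (fun i => x t i - y) := by rw [← hydef]
      _ ≤ α t * (Real.sqrt n * S t) :=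
          mul_le_mul_of_nonneg_left heucl (hα0 t)
      _ = Real.sqrt n * (α t * S t) := by ring
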